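/- Define f_2(c_S) = c_S(1-c_S)(c_S^(2q-1) - h^q (1-c_S)^(2q-1)), f_3(c_S) = (c_S - 1/2)·(c_S + h - c_S·h)^q, and f_4(c_S) = f_2(c_S)/(f_2(c_S)+f_3(c_S)), for h in (0,1) and natural q ≥ 2. Then f_4(1) = 0, f_4(1/2) = 1, and f_4(c_S) ∈ (0,1) for all c_S in (1/2, 1). -/

import Mathlib

theorem stmt_9 (h : ℝ) (q : ℕ) (hh1 : 0 < h) (hh2 : h < 1) (hq : 2 ≤ q)
    (f2 f3 f4 : ℝ → ℝ)
    (hf2 : ∀ cS, f2 cS = cS * (1-cS) * (cS^(2*q-1) - h^q * (1-cS)^(2*q-1)))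
    (hf3 : ∀ cS, f3 cS = (cS - 1/2) * (cS + h - cS*h)^q)
    (hf4 : ∀ cS, f4 cS = f2 cS / (f2 cS + f3 cS)) :
    f4 1 = 0 ∧ f4 (1/2) = 1 ∧ ∀ cS ∈ Set.Ioo (1/2 : ℝ) 1, f4 cS ∈ Set.Ioo (0:ℝ) 1 := by
  have hqne : 2*q - 1 ≠ 0 := by omega
  have hhq : h^q < 1 := pow_lt_one₀ hh1.le hh2 (by omega)
  refine ⟨?_, ?_, ?_⟩
  · rw [hf4, hf2]; norm_num
  · have h2 : f2 (1/2) = (1/2) * (1/2) * ((1/2)^(2*q-1) * (1 - h^q)) := by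
      rw [hf2]; ring_nf
    have hpos : 0 < f2 (1/2) := by
      rw [h2]
      have := pow_pos (by norm_num : (0:ℝ) < 1/2) (2*q-1)
      nlinarith
    rw [hf4, hf3]
    norm_num
    field_simp
    exact hpos.ne'
  · rintro cS ⟨h1, h2⟩
    have hc0 : 0 < cS := by linarith
    have hc1 : 0 < 1 - cS := by linarith
    have hlt : 1 - cS < cS := by linarith
    have hf2pos : 0 < f2 cS := by
      rw [hf2]
      have : h^q * (1-cS)^(2*q-1) < 1 * cS^(2*q-1) := by
        apply mul_lt_mul' hhq.le (pow_lt_pow_left₀ hlt hc1.le hqne) (by positivity) one_pos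
      apply mul_pos (mul_pos hc0 hc1)
      linarith
    have hf3pos : 0 < f3 cS := by
      rw [hf3]
      have hb : 0 < cS + h - cS*h := by nlinarith
      have := pow_pos hb q
      nlinarith
    rw [hf4]
    constructor
    · positivity
    · rw [div_lt_one (by linarith)]; linarith
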